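/- Let G be a group. Then G is a domain — i.e., for all a, b ∈ G with a ≠ 1 and b ≠ 1, there exist x in the normal closure of {a} and y in the normal closure of {b} with x * y ≠ y * x — if and only if G is anticommutative, meaning: (1) for every normal subgroup N of G with N ≠ ⊥ there exist x, y ∈ N with x * y ≠ y * x (no nontrivial abelian normal subgroup), and (2) for all normal subgroups N, M of G with N ≠ ⊥ and M ≠ ⊥, N ⊓ M ≠ ⊥. -/
import Mathlib

theorem group_domain_iff_anticommutative
    (G : Type*) [Group G] :
    (∀ a b : G, a ≠ 1 → b ≠ 1 →
      ∃ x ∈ Subgroup.normalClosure {a}, ∃ y ∈ Subgroup.normalClosure {b}, x * y ≠ y * x) ↔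
    ((∀ N : Subgroup G, N.Normal → N ≠ ⊥ → ∃ x ∈ N, ∃ y ∈ N, x * y ≠ y * x) ∧
      (∀ N M : Subgroup G, N.Normal → M.Normal → N ≠ ⊥ → M ≠ ⊥ → N ⊓ M ≠ ⊥)) := by
  constructor
  · intro h
    constructor
    · intro N hN hNbot
      obtain ⟨a, haN, ha1⟩ := N.bot_or_exists_ne_one.resolve_left hNbot
      have hle : Subgroup.normalClosure {a} ≤ N := by
        exact Subgroup.normalClosure_le_normal (by simpa using haN)
      obtain ⟨x, hx, y, hy, hxy⟩ := h a a ha1 ha1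
      exact ⟨x, hle hx, y, hle hy, hxy⟩
    · intro N M hN hM hNbot hMbot hinf
      obtain ⟨a, haN, ha1⟩ := N.bot_or_exists_ne_one.resolve_left hNbot
      obtain ⟨b, hbM, hb1⟩ := M.bot_or_exists_ne_one.resolve_left hMbot
      have hleN : Subgroup.normalClosure {a} ≤ N :=
        Subgroup.normalClosure_le_normal (by simpa using haN)
      have hleM : Subgroup.normalClosure {b} ≤ M :=
        Subgroup.normalClosure_le_normal (by simpa using hbM)
      obtain ⟨x, hx, y, hy, hxy⟩ := h a b ha1 hb1
      have hxN : x ∈ N := hleN hx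
      have hyM : y ∈ M := hleM hy
      have hcN : x⁻¹ * (y⁻¹ * x * y) ∈ N :=
        N.mul_mem (N.inv_mem hxN) (by simpa using hN.conj_mem x hxN y⁻¹)
      have hcM : x⁻¹ * y⁻¹ * x * y ∈ M := by
        have := M.mul_mem (by simpa using hM.conj_mem y⁻¹ (M.inv_mem hyM) x⁻¹) hyM
        simpa [mul_assoc] using this
      have : x⁻¹ * y⁻¹ * x * y ∈ N ⊓ M := by
        refine ⟨?_, hcM⟩
        simpa [mul_assoc] using hcN
      rw [hinf, Subgroup.mem_bot] at this
      apply hxy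
      calc x * y = y * x * (x⁻¹ * y⁻¹ * x * y) := by group
        _ = y * x := by rw [this, mul_one]
  · rintro ⟨h1, h2⟩ a b ha hb
    have hNbot : Subgroup.normalClosure {a} ≠ ⊥ := by
      intro hbot
      have : a ∈ Subgroup.normalClosure {a} := Subgroup.subset_normalClosure rfl
      rw [hbot, Subgroup.mem_bot] at this
      exact ha this
    have hMbot : Subgroup.normalClosure {b} ≠ ⊥ := by
      intro hbot
      have : b ∈ Subgroup.normalClosure {b} := Subgroup.subset_normalClosure rfl
      rw [hbot, Subgroup.mem_bot] at this
      exact hb this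
    have hKn : (Subgroup.normalClosure {a} ⊓ Subgroup.normalClosure {b}).Normal :=
      Subgroup.normal_inf_normal _ _
    have hKbot := h2 _ _ Subgroup.normalClosure_normal Subgroup.normalClosure_normal hNbot hMbot
    obtain ⟨x, hx, y, hy, hxy⟩ := h1 _ hKn hKbot
    exact ⟨x, hx.1, y, hy.2, hxy⟩
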